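/- (Symmetric Supercodes) Let S ⊆ {0,…,2^n − 1} and let s = [s₁,…,s_m] be a list of positive integers with s₁ + ⋯ + s_m = n. Suppose every s-block-preserving permutation of Fin n stabilizes I = cl_n(S). Then for every t : ℕ, every [s₁,…,s_{m−1}, s_m + t]-block-preserving permutation of Fin (n+t) stabilizes I' = cl_{n+t}(S). -/

import Mathlib

/-- `digitPerm σ i` permutes the (LSB-first) binary digits of `i` according to `σ`. -/
def digitPerm {n : ℕ} (σ : Equiv.Perm (Fin n)) (i : ℕ) : ℕ :=
  ∑ k : Fin n, if Nat.testBit i k.val then 2 ^ ((σ k).val) else 0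

/-- `σ` stabilizes the set `I`. -/
def Stabilizes {n : ℕ} (σ : Equiv.Perm (Fin n)) (I : Set ℕ) : Prop :=
  ∀ i ∈ I, digitPerm σ i ∈ I

/-- `σ` is block-preserving for the block-size profile `s`. -/
def BlockPreserving {n : ℕ} (s : List ℕ) (σ : Equiv.Perm (Fin n)) : Prop :=
  ∀ k < s.length, ∀ p : Fin n,
    (s.take k).sum ≤ p.val → p.val < (s.take (k + 1)).sum →
    ((s.take k).sum ≤ (σ p).val ∧ (σ p).val < (s.take (k + 1)).sum)

/-- Left-swap step: a single `1` digit of `i` is moved one position up. -/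
def LeftSwapStep (n i j : ℕ) : Prop :=
  ∃ l, l + 1 < n ∧ Nat.testBit i l = true ∧ Nat.testBit i (l + 1) = false ∧
    j = i - 2 ^ l + 2 ^ (l + 1)

/-- Binary-domination step at `n` bits. -/
def BinDomStep (n i j : ℕ) : Prop :=
  j < 2 ^ n ∧ ∀ k, Nat.testBit i k ≤ Nat.testBit j k

/-- Universal partial order at `n` bits: reflexive-transitive closure of the union of
left-swap and binary-domination steps. -/
def UPO (n : ℕ) : ℕ → ℕ → Prop :=
  Relation.ReflTransGen (fun i j => LeftSwapStep n i j ∨ BinDomStep n i j)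

/-- UPO closure of `S` at `n` bits. -/
def upoClosure (n : ℕ) (S : Set ℕ) : Set ℕ :=
  {j | j < 2 ^ n ∧ ∃ i ∈ S, UPO n i j}


open Finset

/-- Number of set bits of `x` in positions `[k, N)`. -/
def cntN (N k x : ℕ) : ℕ := ((Finset.Ico k N).filter (fun p => Nat.testBit x p)).card

/-- Partial sums of the block-size profile (block boundaries). -/
def bnd (s : List ℕ) (k : ℕ) : ℕ := (s.take k).sum

lemma sum_range_two_pow (a : ℕ) : ∑ i ∈ Finset.range a, 2 ^ i = 2 ^ a - 1 := by
  induction a with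
  | zero => simp
  | succ a ih =>
    rw [Finset.sum_range_succ, ih, pow_succ]
    have := Nat.one_le_two_pow (n := a)
    omega

lemma testBit_sum_two_pow (T : Finset ℕ) (k : ℕ) :
    (∑ i ∈ T, 2 ^ i).testBit k = decide (k ∈ T) := by
  induction T using Finset.induction_on_max with
  | empty => simp
  | insert a s ha ih =>
    have hs : ∑ i ∈ s, 2 ^ i < 2 ^ a := by
      have h1 : ∑ i ∈ s, 2 ^ i ≤ ∑ i ∈ Finset.range a, 2 ^ i := by
        apply Finset.sum_le_sum_of_subset
        intro x hx; exact Finset.mem_range.2 (ha x hx)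
      have h2 := sum_range_two_pow a
      have := Nat.one_le_two_pow (n := a)
      omega
    rw [Finset.sum_insert (fun h => lt_irrefl a (ha a h))]
    rcases lt_trichotomy k a with h | rfl | h
    · rw [Nat.testBit_two_pow_add_gt h, ih]
      have hka : k ≠ a := by omega
      simp [Finset.mem_insert, hka]
    · rw [Nat.testBit_two_pow_add_eq, Nat.testBit_lt_two_pow hs]
      simp
    · have hlt : 2 ^ a + ∑ i ∈ s, 2 ^ i < 2 ^ k := by
        have h1 : (2:ℕ) ^ (a+1) ≤ 2 ^ k := Nat.pow_le_pow_right (by norm_num) h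
        have h2 : (2:ℕ) ^ (a+1) = 2 ^ a * 2 := pow_succ 2 a
        omega
      rw [Nat.testBit_lt_two_pow hlt]
      have h1 : k ≠ a := by omega
      have h2 : k ∉ s := fun hk => by have := ha k hk; omega
      simp [Finset.mem_insert, h1, h2]

lemma digitPerm_eq {N : ℕ} (σ : Equiv.Perm (Fin N)) (x : ℕ) :
    digitPerm σ x =
      ∑ q ∈ (Finset.univ.filter fun k : Fin N => x.testBit k.val).image
        (fun k => (σ k).val), 2 ^ q := by
  rw [Finset.sum_image]
  · rw [digitPerm, Finset.sum_filter]
  · intro a _ b _ h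
    exact σ.injective (Fin.val_injective h)

lemma testBit_digitPerm_apply {N : ℕ} (σ : Equiv.Perm (Fin N)) (x : ℕ) (k : Fin N) :
    (digitPerm σ x).testBit ((σ k).val) = x.testBit k.val := by
  rw [digitPerm_eq, testBit_sum_two_pow]
  simp only [Finset.mem_image, Finset.mem_filter, Finset.mem_univ, true_and]
  by_cases h : x.testBit k.val
  · simp only [h, decide_eq_true_eq]
    exact ⟨k, h, rfl⟩
  · simp only [h, decide_eq_false_iff_not]
    rintro ⟨a, ha, hval⟩
    exact h ((σ.injective (Fin.val_injective hval)) ▸ ha)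

lemma testBit_digitPerm_ge {N : ℕ} (σ : Equiv.Perm (Fin N)) (x q : ℕ) (hq : N ≤ q) :
    (digitPerm σ x).testBit q = false := by
  rw [digitPerm_eq, testBit_sum_two_pow]
  simp only [decide_eq_false_iff_not, Finset.mem_image]
  rintro ⟨a, _, hval⟩
  exact absurd ((σ a).isLt) (by omega)

lemma digitPerm_lt_two_pow {N : ℕ} (σ : Equiv.Perm (Fin N)) (x : ℕ) :
    digitPerm σ x < 2 ^ N :=
  Nat.lt_pow_two_of_testBit _ (fun i hi => testBit_digitPerm_ge σ x i hi)

lemma testBit_digitPerm_symm {N : ℕ} (σ : Equiv.Perm (Fin N)) (x : ℕ) (q : Fin N) :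
    (digitPerm σ x).testBit q.val = x.testBit (σ.symm q).val := by
  have := testBit_digitPerm_apply σ x (σ.symm q)
  rwa [Equiv.apply_symm_apply] at this

lemma testBit_leftSwap {x l : ℕ} (h1 : x.testBit l = true) (h2 : x.testBit (l+1) = false)
    (j : ℕ) :
    (x - 2 ^ l + 2 ^ (l+1)).testBit j =
      if j = l then false else if j = l + 1 then true else x.testBit j := by
  set u := x / 2 ^ (l+1) with hu_def
  set c := x % 2 ^ l with hc_def
  have hxl : x / 2 ^ l % 2 = 1 := by
    have := h1; rw [Nat.testBit_eq_decide_div_mod_eq] at this; simpa using this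
  have hu2 : u % 2 = 0 := by
    have := h2; rw [Nat.testBit_eq_decide_div_mod_eq] at this; simpa using this
  have hdd : x / 2 ^ l / 2 = u := by
    rw [Nat.div_div_eq_div_mul, hu_def, pow_succ]
  have hpow : (2:ℕ) ^ (l+1) = 2 ^ l * 2 := pow_succ 2 l
  have hc_lt : c < 2 ^ l := Nat.mod_lt _ (Nat.two_pow_pos l)
  have hxdecomp : x = 2 ^ (l+1) * u + (2 ^ l + c) := by
    have e1 : x = 2 ^ l * (x / 2 ^ l) + c := (Nat.div_add_mod x (2 ^ l)).symm
    have e2 : x / 2 ^ l = 2 * u + 1 := by omega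
    rw [e1, e2, hpow]; ring
  have hmul : 2 ^ (l+1) * (u + 1) = 2 ^ (l+1) * u + 2 ^ (l+1) := by ring
  have hydecomp : x - 2 ^ l + 2 ^ (l+1) = 2 ^ (l+1) * (u + 1) + c := by omega
  have hblt : 2 ^ l + c < 2 ^ (l+1) := by omega
  have hclt : c < 2 ^ (l+1) := by omega
  rw [hydecomp, Nat.testBit_two_pow_mul_add _ hclt]
  rcases lt_trichotomy j l with h | rfl | h
  · rw [if_pos (by omega)]
    have hx : x.testBit j = (2 ^ l + c).testBit j := by
      conv_lhs => rw [hxdecomp]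
      rw [Nat.testBit_two_pow_mul_add _ hblt, if_pos (by omega)]
    rw [Nat.testBit_two_pow_add_gt h] at hx
    simp only [if_neg (by omega : ¬ j = l), if_neg (by omega : ¬ j = l + 1)]
    exact hx.symm
  · rw [if_pos (by omega), if_pos rfl]
    exact Nat.testBit_lt_two_pow hc_lt
  · rw [if_neg (by omega), if_neg (by omega : ¬ j = l)]
    have hx : x.testBit j = u.testBit (j - (l+1)) := by
      conv_lhs => rw [hxdecomp]
      rw [Nat.testBit_two_pow_mul_add _ hblt, if_neg (by omega)]
    rw [hx]
    rcases Nat.eq_or_lt_of_le (by omega : l + 1 ≤ j) with rfl | hj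
    · rw [if_pos rfl]
      simp only [Nat.sub_self, Nat.testBit_zero, decide_eq_true_eq]
      omega
    · rw [if_neg (by omega)]
      obtain ⟨e, he⟩ : ∃ e, j - (l+1) = e + 1 := ⟨j - (l+1) - 1, by omega⟩
      rw [he, Nat.testBit_add_one, Nat.testBit_add_one]
      have : (u + 1) / 2 = u / 2 := by omega
      rw [this]

lemma cnt_mono_bits {N k x y : ℕ} (h : ∀ p, x.testBit p = true → y.testBit p = true) :
    cntN N k x ≤ cntN N k y := by
  apply Finset.card_le_card
  intro p hp
  rw [Finset.mem_filter] at *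
  exact ⟨hp.1, h p hp.2⟩

lemma cnt_anti {N x k k' : ℕ} (h : k ≤ k') : cntN N k' x ≤ cntN N k x :=
  Finset.card_le_card (Finset.filter_subset_filter _ (Finset.Ico_subset_Ico h le_rfl))

lemma cnt_split {N a k x : ℕ} (h1 : a ≤ k) (h2 : k ≤ N) :
    cntN N a x = ((Finset.Ico a k).filter (fun p => x.testBit p)).card + cntN N k x := by
  unfold cntN
  rw [← Finset.card_union_of_disjoint, ← Finset.filter_union,
    Finset.Ico_union_Ico_eq_Ico h1 h2]
  exact Finset.disjoint_filter_filter (Finset.Ico_disjoint_Ico_consecutive a k N)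

lemma cnt_swap_le {N x l : ℕ} (h1 : x.testBit l = true) (h2 : x.testBit (l+1) = false)
    (hl : l + 1 < N) (k : ℕ) :
    cntN N k x ≤ cntN N k (x - 2 ^ l + 2 ^ (l+1)) := by
  apply Finset.card_le_card_of_injOn (fun p => if p = l then l + 1 else p)
  · intro p hp
    rw [Finset.mem_coe, Finset.mem_filter, Finset.mem_Ico] at hp
    rw [Finset.mem_coe, Finset.mem_filter, Finset.mem_Ico]
    beta_reduce
    by_cases hpl : p = l
    · rw [if_pos hpl]
      refine ⟨⟨by omega, hl⟩, ?_⟩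
      rw [testBit_leftSwap h1 h2, if_neg (by omega : ¬ (l+1) = l), if_pos rfl]
    · rw [if_neg hpl]
      have hpl1 : p ≠ l + 1 := by
        intro hc; rw [hc] at hp; rw [hp.2] at h2; simp at h2
      refine ⟨hp.1, ?_⟩
      rw [testBit_leftSwap h1 h2, if_neg hpl, if_neg hpl1]
      exact hp.2
  · intro p1 hp1 p2 hp2 heq
    simp only [Finset.coe_filter, Set.mem_setOf_eq, Finset.mem_Ico] at hp1 hp2
    simp only at heq
    by_cases e1 : p1 = l
    · by_cases e2 : p2 = l
      · rw [e1, e2]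
      · rw [if_pos e1, if_neg e2] at heq
        exfalso; rw [← heq] at hp2; rw [hp2.2] at h2; simp at h2
    · by_cases e2 : p2 = l
      · rw [if_neg e1, if_pos e2] at heq
        exfalso; rw [heq] at hp1; rw [hp1.2] at h2; simp at h2
      · rwa [if_neg e1, if_neg e2] at heq

lemma cnt_upo {N i j : ℕ} (h : UPO N i j) (k : ℕ) : cntN N k i ≤ cntN N k j := by
  induction h with
  | refl => exact le_rfl
  | tail _ hbc ih =>
    rcases hbc with ⟨l, hl, hb1, hb2, rfl⟩ | ⟨_, hbits⟩
    · exact le_trans ih (cnt_swap_le hb1 hb2 hl k)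
    · refine le_trans ih (cnt_mono_bits (fun p hp => ?_))
      have := hbits p
      rw [hp] at this
      exact Bool.eq_true_of_true_le this

lemma card_filter_all {a b x : ℕ} (h : ∀ q, a ≤ q → q < b → x.testBit q = true) :
    ((Finset.Ico a b).filter (fun p => x.testBit p)).card = b - a := by
  rw [Finset.filter_true_of_mem, Nat.card_Ico]
  intro q hq
  rw [Finset.mem_Ico] at hq
  exact h q hq.1 hq.2

lemma card_filter_le_of_bit_false {a b x : ℕ} (ha : x.testBit a = false) :
    ((Finset.Ico a b).filter (fun p => x.testBit p)).card ≤ b - a - 1 := by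
  rcases Nat.lt_or_ge a b with hab | hab
  · have hsub : ((Finset.Ico a b).filter (fun p => x.testBit p)) ⊆ Finset.Ico (a+1) b := by
      intro q hq
      rw [Finset.mem_filter, Finset.mem_Ico] at hq
      rw [Finset.mem_Ico]
      rcases Nat.eq_or_lt_of_le hq.1.1 with rfl | h
      · rw [hq.2] at ha; simp at ha
      · exact ⟨h, hq.1.2⟩
    have := Finset.card_le_card hsub
    rw [Nat.card_Ico] at this
    omega
  · rw [Finset.Ico_eq_empty (by omega)]
    simp

lemma swap_filter_interval {x l k : ℕ} (h1 : x.testBit l = true)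
    (h2 : x.testBit (l+1) = false) (hk : k ≤ l + 1) :
    (Finset.Ico k (l+2)).filter (fun p => (x - 2 ^ l + 2 ^ (l+1)).testBit p) =
      insert (l+1) (((Finset.Ico k (l+2)).filter (fun p => x.testBit p)).erase l) := by
  ext q
  rw [Finset.mem_filter, Finset.mem_insert, Finset.mem_erase, Finset.mem_filter,
    Finset.mem_Ico]
  rcases eq_or_ne q (l+1) with rfl | hq1
  · rw [testBit_leftSwap h1 h2, if_neg (by omega : ¬ l + 1 = l), if_pos rfl]
    constructor
    · intro _; exact Or.inl rfl
    · intro _; exact ⟨⟨hk, by omega⟩, rfl⟩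
  · rcases eq_or_ne q l with rfl | hq0
    · simp only [testBit_leftSwap h1 h2, if_pos rfl]
      constructor
      · intro h; exact absurd h.2 (by simp)
      · rintro (h | h)
        · exact absurd h hq1
        · exact absurd rfl h.1
    · rw [testBit_leftSwap h1 h2, if_neg hq0, if_neg hq1]
      constructor
      · intro h; exact Or.inr ⟨hq0, h⟩
      · rintro (h | h)
        · exact absurd h hq1
        · exact h.2

lemma cnt_swap_gt {N x l k : ℕ} (h1 : x.testBit l = true) (h2 : x.testBit (l+1) = false)
    (hk : l + 2 ≤ k) :
    cntN N k (x - 2 ^ l + 2 ^ (l+1)) = cntN N k x := by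
  unfold cntN
  congr 1
  apply Finset.filter_congr
  intro q hq
  rw [Finset.mem_Ico] at hq
  rw [testBit_leftSwap h1 h2, if_neg (by omega), if_neg (by omega)]

lemma cnt_swap_le_eq {N x l k : ℕ} (h1 : x.testBit l = true) (h2 : x.testBit (l+1) = false)
    (hl : l + 1 < N) (hk : k ≤ l) :
    cntN N k (x - 2 ^ l + 2 ^ (l+1)) = cntN N k x := by
  rw [cnt_split (x := x - 2 ^ l + 2 ^ (l+1)) (by omega : k ≤ l + 2) (by omega : l + 2 ≤ N),
    cnt_split (x := x) (by omega : k ≤ l + 2) (by omega : l + 2 ≤ N),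
    cnt_swap_gt h1 h2 (le_refl (l+2)), swap_filter_interval h1 h2 (by omega)]
  have hl_mem : l ∈ (Finset.Ico k (l+2)).filter (fun p => x.testBit p) := by
    rw [Finset.mem_filter, Finset.mem_Ico]; exact ⟨⟨hk, by omega⟩, h1⟩
  have hl1_notmem : l + 1 ∉ ((Finset.Ico k (l+2)).filter (fun p => x.testBit p)).erase l := by
    intro hc
    rw [Finset.mem_erase, Finset.mem_filter] at hc
    rw [hc.2.2] at h2; simp at h2
  rw [Finset.card_insert_of_notMem hl1_notmem, Finset.card_erase_of_mem hl_mem]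
  have : 0 < ((Finset.Ico k (l+2)).filter (fun p => x.testBit p)).card :=
    Finset.card_pos.2 ⟨l, hl_mem⟩
  omega

lemma cnt_swap_succ {N x l : ℕ} (h1 : x.testBit l = true) (h2 : x.testBit (l+1) = false)
    (hl : l + 1 < N) :
    cntN N (l+1) (x - 2 ^ l + 2 ^ (l+1)) = cntN N (l+1) x + 1 := by
  rw [cnt_split (x := x - 2 ^ l + 2 ^ (l+1)) (by omega : l + 1 ≤ l + 2) (by omega : l + 2 ≤ N),
    cnt_split (x := x) (by omega : l + 1 ≤ l + 2) (by omega : l + 2 ≤ N),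
    cnt_swap_gt h1 h2 (le_refl (l+2)), swap_filter_interval h1 h2 (by omega)]
  have hempty : (Finset.Ico (l+1) (l+2)).filter (fun p => x.testBit p) = ∅ := by
    apply Finset.filter_false_of_mem
    intro q hq
    rw [Finset.mem_Ico] at hq
    have : q = l + 1 := by omega
    rw [this, h2]; simp
  rw [hempty]
  simp [Finset.erase_empty]
  omega

-- the main constructive lemma ----------------------------------------------

lemma upo_of_cnt_le {N i j : ℕ} (hi : i < 2 ^ N) (hj : j < 2 ^ N)
    (h : ∀ k, cntN N k i ≤ cntN N k j) : UPO N i j := by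
  generalize hD : (∑ k ∈ Finset.range N, (cntN N k j - cntN N k i)) = D
  induction D using Nat.strong_induction_on generalizing i with
  | _ D ih =>
  by_cases hsub : ∀ p, i.testBit p = true → j.testBit p = true
  · refine Relation.ReflTransGen.single (Or.inr ⟨hj, fun k => ?_⟩)
    cases hik : i.testBit k with
    | false => exact Bool.false_le _
    | true => rw [hsub k hik]
  · push_neg at hsub
    obtain ⟨p, hip, hjp⟩ := hsub
    replace hjp : j.testBit p = false := by simpa using hjp
    have hpN : p < N := by
      by_contra hc
      rw [Nat.testBit_lt_two_pow (lt_of_lt_of_le hi (Nat.pow_le_pow_right (by norm_num) (by omega)))] at hip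
      exact Bool.noConfusion hip
    have hex : ∃ e, i.testBit (p + e + 1) = false := by
      refine ⟨N, Nat.testBit_lt_two_pow ?_⟩
      exact lt_of_lt_of_le hi (Nat.pow_le_pow_right (by norm_num) (by omega))
    set e0 := Nat.find hex with he0
    set l := p + e0 with hl_def
    have f2 : i.testBit (l + 1) = false := Nat.find_spec hex
    have f1 : ∀ q, p ≤ q → q ≤ l → i.testBit q = true := by
      intro q hq1 hq2
      rcases Nat.eq_or_lt_of_le hq1 with rfl | hq
      · exact hip
      · have hd : q - p - 1 < e0 := by omega
        have := Nat.find_min hex hd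
        rw [Bool.not_eq_false] at this
        have hqe : p + (q - p - 1) + 1 = q := by omega
        rwa [hqe] at this
    have f3 : l + 1 < N := by
      by_contra hc
      have hcnt_i : cntN N p i = N - p := by
        unfold cntN
        apply card_filter_all
        intro q hq1 hq2
        exact f1 q hq1 (by omega)
      have hcnt_j : cntN N p j ≤ N - p - 1 := card_filter_le_of_bit_false hjp
      have := h p
      omega
    have f4 : cntN N (l+1) i < cntN N (l+1) j := by
      have hi_split := cnt_split (N := N) (a := p) (k := l+1) (x := i) (by omega) (by omega)
      have hj_split := cnt_split (N := N) (a := p) (k := l+1) (x := j) (by omega) (by omega)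
      have hcard_i : ((Finset.Ico p (l+1)).filter (fun q => i.testBit q)).card = l + 1 - p :=
        card_filter_all (fun q hq1 hq2 => f1 q hq1 (by omega))
      have hcard_j : ((Finset.Ico p (l+1)).filter (fun q => j.testBit q)).card ≤ l + 1 - p - 1 :=
        card_filter_le_of_bit_false hjp
      have := h p
      omega
    set i' := i - 2 ^ l + 2 ^ (l+1) with hi'_def
    have hstep : LeftSwapStep N i i' := ⟨l, f3, f1 l (by omega) le_rfl, f2, rfl⟩
    have hi' : i' < 2 ^ N := by
      apply Nat.lt_pow_two_of_testBit
      intro q hq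
      rw [hi'_def, testBit_leftSwap (f1 l (by omega) le_rfl) f2, if_neg (by omega),
        if_neg (by omega)]
      exact Nat.testBit_lt_two_pow
        (lt_of_lt_of_le hi (Nat.pow_le_pow_right (by norm_num) hq))
    have hcnt' : ∀ k, cntN N k i' ≤ cntN N k j := by
      intro k
      rcases lt_trichotomy k (l+1) with hk | rfl | hk
      · rw [hi'_def, cnt_swap_le_eq (f1 l (by omega) le_rfl) f2 f3 (by omega)]
        exact h k
      · rw [hi'_def, cnt_swap_succ (f1 l (by omega) le_rfl) f2 f3]
        omega
      · rw [hi'_def, cnt_swap_gt (f1 l (by omega) le_rfl) f2 (by omega)]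
        exact h k
    have hlt : (∑ k ∈ Finset.range N, (cntN N k j - cntN N k i')) < D := by
      rw [← hD]
      apply Finset.sum_lt_sum
      · intro k _
        exact Nat.sub_le_sub_left (cnt_swap_le (f1 l (by omega) le_rfl) f2 f3 k) _
      · refine ⟨l + 1, Finset.mem_range.2 f3, ?_⟩
        rw [hi'_def, cnt_swap_succ (f1 l (by omega) le_rfl) f2 f3]
        omega
    exact Relation.ReflTransGen.head (Or.inl hstep) (ih _ hlt hi' hcnt' rfl)

lemma upo_mono {n N i j : ℕ} (h : n ≤ N) (hu : UPO n i j) : UPO N i j := by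
  induction hu with
  | refl => exact Relation.ReflTransGen.refl
  | tail _ hbc ih =>
    refine Relation.ReflTransGen.tail ih ?_
    rcases hbc with ⟨l, hl, h1, h2, rfl⟩ | ⟨hlt, hbits⟩
    · exact Or.inl ⟨l, by omega, h1, h2, rfl⟩
    · exact Or.inr ⟨lt_of_lt_of_le hlt (Nat.pow_le_pow_right (by norm_num) h), hbits⟩

lemma cnt_shrink {n N k x : ℕ} (hx : x < 2 ^ n) (hn : n ≤ N) :
    cntN N k x = cntN n k x := by
  unfold cntN
  congr 1
  ext q
  rw [Finset.mem_filter, Finset.mem_filter, Finset.mem_Ico, Finset.mem_Ico]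
  constructor
  · rintro ⟨⟨hq1, _⟩, hbit⟩
    refine ⟨⟨hq1, ?_⟩, hbit⟩
    by_contra hc
    rw [Nat.testBit_lt_two_pow
      (lt_of_lt_of_le hx (Nat.pow_le_pow_right (by norm_num) (by omega)))] at hbit
    exact Bool.noConfusion hbit
  · rintro ⟨⟨hq1, hq2⟩, hbit⟩
    exact ⟨⟨hq1, by omega⟩, hbit⟩

lemma cnt_digitPerm {N B : ℕ} (σ : Equiv.Perm (Fin N)) (x : ℕ)
    (hthr : ∀ p : Fin N, B ≤ (σ p).val ↔ B ≤ p.val) :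
    cntN N B (digitPerm σ x) = cntN N B x := by
  unfold cntN
  apply Finset.card_bij'
    (i := fun p hp => (σ.symm ⟨p, (Finset.mem_Ico.1 (Finset.mem_filter.1 hp).1).2⟩).val)
    (j := fun q hq => (σ ⟨q, (Finset.mem_Ico.1 (Finset.mem_filter.1 hq).1).2⟩).val)
  · intro p hp
    simp only [Fin.eta, Equiv.apply_symm_apply]
  · intro q hq
    simp only [Fin.eta, Equiv.symm_apply_apply]
  · intro p hp
    rw [Finset.mem_filter, Finset.mem_Ico] at hp ⊢
    obtain ⟨⟨hB, hN⟩, hbit⟩ := hp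
    have hb : (digitPerm σ x).testBit (⟨p, hN⟩ : Fin N).val = x.testBit (σ.symm ⟨p, hN⟩).val :=
      testBit_digitPerm_symm σ x ⟨p, hN⟩
    refine ⟨⟨?_, (σ.symm ⟨p, hN⟩).isLt⟩, by rw [← hb]; exact hbit⟩
    have := hthr (σ.symm ⟨p, hN⟩)
    rw [Equiv.apply_symm_apply] at this
    exact this.1 hB
  · intro q hq
    rw [Finset.mem_filter, Finset.mem_Ico] at hq ⊢
    obtain ⟨⟨hB, hN⟩, hbit⟩ := hq
    have hb : (digitPerm σ x).testBit (σ ⟨q, hN⟩).val = x.testBit (σ.symm (σ ⟨q, hN⟩)).val :=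
      testBit_digitPerm_symm σ x (σ ⟨q, hN⟩)
    rw [Equiv.symm_apply_apply] at hb
    refine ⟨⟨(hthr ⟨q, hN⟩).2 hB, (σ ⟨q, hN⟩).isLt⟩, by rw [hb]; exact hbit⟩

lemma bnd_zero (s : List ℕ) : bnd s 0 = 0 := rfl

lemma bnd_succ {s : List ℕ} {k : ℕ} (hk : k < s.length) :
    bnd s (k+1) = bnd s k + s.get ⟨k, hk⟩ :=
  List.sum_take_succ _ _ _

lemma bnd_le_succ (s : List ℕ) (k : ℕ) : bnd s k ≤ bnd s (k+1) := by
  rcases Nat.lt_or_ge k s.length with hk | hk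
  · rw [bnd_succ hk]; omega
  · unfold bnd
    rw [List.take_of_length_le hk, List.take_of_length_le (by omega)]

lemma bnd_mono (s : List ℕ) : Monotone (bnd s) :=
  monotone_nat_of_le_succ (bnd_le_succ s)

lemma bnd_length (s : List ℕ) : bnd s s.length = s.sum := by
  unfold bnd; rw [List.take_length]

lemma bnd_cover (s : List ℕ) : ∀ m k, k < bnd s m →
    ∃ r, r < m ∧ bnd s r ≤ k ∧ k < bnd s (r+1) := by
  intro m
  induction m with
  | zero => intro k hk; rw [bnd_zero] at hk; omega
  | succ m ih =>
    intro k hk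
    rcases Nat.lt_or_ge k (bnd s m) with h | h
    · obtain ⟨r, hr, h1, h2⟩ := ih k h
      exact ⟨r, by omega, h1, h2⟩
    · exact ⟨m, by omega, h, hk⟩

lemma thr_of_blockPreserving {n : ℕ} {s : List ℕ} (hsum : s.sum = n) {σ : Equiv.Perm (Fin n)}
    (hσ : BlockPreserving s σ) (r : ℕ) (p : Fin n) :
    bnd s r ≤ (σ p).val ↔ bnd s r ≤ p.val := by
  have hp : p.val < bnd s s.length := by rw [bnd_length, hsum]; exact p.isLt
  obtain ⟨kb, hkb, h1, h2⟩ := bnd_cover s s.length p.val hp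
  have hblk := hσ kb hkb p h1 h2
  have h3 : bnd s kb ≤ (σ p).val := hblk.1
  have h4 : (σ p).val < bnd s (kb+1) := hblk.2
  rcases le_or_gt r kb with hr | hr
  · have : bnd s r ≤ bnd s kb := bnd_mono s hr
    exact iff_of_true (le_trans this h3) (le_trans this h1)
  · have : bnd s (kb+1) ≤ bnd s r := bnd_mono s hr
    exact iff_of_false (by omega) (by omega)

lemma blockPreserving_of_window {n : ℕ} {s : List ℕ} {σ : Equiv.Perm (Fin n)} (r : ℕ)
    (hfix : ∀ p : Fin n, ¬(bnd s r ≤ p.val ∧ p.val < bnd s (r+1)) → σ p = p)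
    (hwin : ∀ p : Fin n, (bnd s r ≤ p.val ∧ p.val < bnd s (r+1)) →
      bnd s r ≤ (σ p).val ∧ (σ p).val < bnd s (r+1)) :
    BlockPreserving s σ := by
  intro k hk p hp1 hp2
  by_cases hkr : k = r
  · subst hkr; exact hwin p ⟨hp1, hp2⟩
  · rw [hfix p ?_]
    · exact ⟨hp1, hp2⟩
    · rintro ⟨hc1, hc2⟩
      rcases Nat.lt_or_ge k r with h | h
      · have : bnd s (k+1) ≤ bnd s r := bnd_mono s h
        change bnd s k ≤ p.val at hp1
        change p.val < bnd s (k+1) at hp2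
        omega
      · have : bnd s (r+1) ≤ bnd s k := bnd_mono s (by omega)
        change bnd s k ≤ p.val at hp1
        omega

lemma thr_of_window {n a b B : ℕ} {σ : Equiv.Perm (Fin n)}
    (hfix : ∀ p : Fin n, ¬(a ≤ p.val ∧ p.val < b) → σ p = p)
    (hwin : ∀ p : Fin n, (a ≤ p.val ∧ p.val < b) → a ≤ (σ p).val ∧ (σ p).val < b)
    (hB : B ≤ a ∨ b ≤ B) (p : Fin n) : B ≤ (σ p).val ↔ B ≤ p.val := by
  by_cases hp : a ≤ p.val ∧ p.val < b
  · have := hwin p hp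
    rcases hB with h | h
    · exact iff_of_true (by omega) (by omega)
    · exact iff_of_false (by omega) (by omega)
  · rw [hfix p hp]

lemma exists_perm_swap_sets {α : Type*} [Fintype α] [DecidableEq α] (A B : Finset α)
    (h : A.card = B.card) : ∃ e : Equiv.Perm α, ∀ p, (e p ∈ B ↔ p ∈ A) := by
  have h1 : Fintype.card {x // x ∈ A} = Fintype.card {x // x ∈ B} := by
    simp only [Fintype.card_coe, h]
  have h2 : Fintype.card {x // ¬ x ∈ A} = Fintype.card {x // ¬ x ∈ B} := by
    rw [Fintype.card_subtype_compl, Fintype.card_subtype_compl]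
    simp only [Fintype.card_coe, h]
  let eq1 : {x // x ∈ A} ≃ {x // x ∈ B} := Fintype.equivOfCardEq h1
  let eq2 : {x // ¬ x ∈ A} ≃ {x // ¬ x ∈ B} := Fintype.equivOfCardEq h2
  refine ⟨(Equiv.sumCompl (· ∈ A)).symm.trans ((eq1.sumCongr eq2).trans
    (Equiv.sumCompl (· ∈ B))), fun p => ?_⟩
  by_cases hp : p ∈ A
  · simp only [Equiv.trans_apply, Equiv.sumCompl_symm_apply_of_pos hp,
      Equiv.sumCongr_apply, Sum.map_inl, Equiv.sumCompl_apply_inl]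
    exact iff_of_true (eq1 ⟨p, hp⟩).2 hp
  · simp only [Equiv.trans_apply, Equiv.sumCompl_symm_apply_of_neg hp,
      Equiv.sumCongr_apply, Sum.map_inr, Equiv.sumCompl_apply_inr]
    exact iff_of_false (eq2 ⟨p, hp⟩).2 hp

lemma card_window_init (n a w b : ℕ) (hw : a + w ≤ n) (hb : b ≤ w) :
    (Finset.univ.filter
      fun p : {q : Fin n // a ≤ q.val ∧ q.val < a + w} => p.val.val < a + b).card = b := by
  have key : (Finset.univ.filter
      fun p : {q : Fin n // a ≤ q.val ∧ q.val < a + w} => p.val.val < a + b).card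
      = (Finset.Ico a (a+b)).card := by
    apply Finset.card_bij (fun p _ => p.val.val)
    · intro p hp
      rw [Finset.mem_filter] at hp
      rw [Finset.mem_Ico]
      exact ⟨p.2.1, hp.2⟩
    · intro p1 _ p2 _ heq
      exact Subtype.ext (Fin.val_injective heq)
    · intro q hq
      rw [Finset.mem_Ico] at hq
      refine ⟨⟨⟨q, by omega⟩, ⟨by simp only [Fin.val_mk]; omega,
        by simp only [Fin.val_mk]; omega⟩⟩, ?_, rfl⟩
      rw [Finset.mem_filter]
      exact ⟨Finset.mem_univ _, hq.2⟩
  rw [key, Nat.card_Ico]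
  omega

lemma exists_window_perm (n a w : ℕ) (hw : a + w ≤ n) (x : ℕ) :
    ∃ (σ : Equiv.Perm (Fin n)) (c : ℕ), c ≤ w ∧
      (∀ p : Fin n, ¬(a ≤ p.val ∧ p.val < a + w) → σ p = p) ∧
      (∀ p : Fin n, (a ≤ p.val ∧ p.val < a + w) → a ≤ (σ p).val ∧ (σ p).val < a + w) ∧
      (∀ q : Fin n, (a ≤ q.val ∧ q.val < a + w) →
        ((digitPerm σ x).testBit q.val = decide (q.val < a + c))) ∧
      (∀ q : Fin n, ¬(a ≤ q.val ∧ q.val < a + w) →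
        (digitPerm σ x).testBit q.val = x.testBit q.val) := by
  classical
  set W := fun p : Fin n => a ≤ p.val ∧ p.val < a + w with hW
  set A : Finset {p : Fin n // W p} := Finset.univ.filter (fun p => x.testBit p.val.val)
    with hA
  set c := A.card with hc
  have hcw : c ≤ w := by
    have h1 : A.card ≤ (Finset.univ : Finset {p : Fin n // W p}).card :=
      Finset.card_le_card (Finset.filter_subset _ _)
    have h2 : (Finset.univ : Finset {p : Fin n // W p}).card = w := by
      have := card_window_init n a w w hw le_rfl
      rw [Finset.filter_true_of_mem (fun p _ => p.2.2)] at this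
      exact this
    omega
  set B : Finset {p : Fin n // W p} := Finset.univ.filter (fun p => p.val.val < a + c)
    with hB
  have hcard : A.card = B.card := by
    rw [hB, card_window_init n a w c hw hcw, hc]
  obtain ⟨τ, hτ⟩ := exists_perm_swap_sets A B hcard
  set σ : Equiv.Perm (Fin n) := τ.subtypeCongr (Equiv.refl _) with hσ
  have hfix : ∀ p : Fin n, ¬ W p → σ p = p := by
    intro p hp
    rw [hσ, Equiv.Perm.subtypeCongr.right_apply _ _ hp]
    rfl
  have hwin : ∀ p : Fin n, W p → W (σ p) := by
    intro p hp
    rw [hσ, Equiv.Perm.subtypeCongr.left_apply _ _ hp]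
    exact (τ ⟨p, hp⟩).2
  have hsymm_fix : ∀ q : Fin n, ¬ W q → σ.symm q = q := by
    intro q hq
    have : σ q = q := hfix q hq
    conv_lhs => rw [← this]
    rw [Equiv.symm_apply_apply]
  have hsymm_win : ∀ (q : Fin n) (hq : W q), σ.symm q = ((τ.symm ⟨q, hq⟩ : {p // W p}) : Fin n) := by
    intro q hq
    rw [Equiv.symm_apply_eq]
    have hmem : W ((τ.symm ⟨q, hq⟩ : {p // W p}) : Fin n) := (τ.symm ⟨q, hq⟩).2
    rw [hσ, Equiv.Perm.subtypeCongr.left_apply _ _ hmem]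
    have : (⟨((τ.symm ⟨q, hq⟩ : {p // W p}) : Fin n), hmem⟩ : {p // W p}) = τ.symm ⟨q, hq⟩ :=
      Subtype.ext rfl
    rw [this, Equiv.apply_symm_apply]
  refine ⟨σ, c, hcw, hfix, fun p hp => hwin p hp, ?_, ?_⟩
  · intro q hq
    rw [testBit_digitPerm_symm, hsymm_win q hq]
    have hiff := hτ (τ.symm ⟨q, hq⟩)
    rw [Equiv.apply_symm_apply] at hiff
    have hmemB : ((⟨q, hq⟩ : {p // W p}) ∈ B) ↔ q.val < a + c := by
      rw [hB, Finset.mem_filter]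
      simp
    have hmemA : (τ.symm ⟨q, hq⟩ ∈ A) ↔ x.testBit ((τ.symm ⟨q, hq⟩ : {p // W p}) : Fin n).val := by
      rw [hA, Finset.mem_filter]
      simp
    rcases Nat.lt_or_ge q.val (a + c) with hlt | hge
    · rw [decide_eq_true hlt]
      exact (hmemA.1 (hiff.1 (hmemB.2 hlt)))
    · have : ¬ q.val < a + c := by omega
      rw [decide_eq_false this]
      rw [← Bool.not_eq_true]
      intro hbit
      exact this (hmemB.1 (hiff.2 (hmemA.2 hbit)))
  · intro q hq
    rw [testBit_digitPerm_symm, hsymm_fix q hq]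

lemma justify {n : ℕ} (s : List ℕ) (hsum : s.sum = n) (I : Set ℕ)
    (hI : ∀ σ : Equiv.Perm (Fin n), BlockPreserving s σ → Stabilizes σ I)
    (hIlt : ∀ y ∈ I, y < 2 ^ n)
    (x : ℕ) (hx : x ∈ I) :
    ∃ y ∈ I, (∀ j, cntN n (bnd s j) y = cntN n (bnd s j) x) ∧
      (∀ k < s.length, ∀ p q : ℕ, bnd s k ≤ p → p ≤ q → q < bnd s (k+1) →
        y.testBit q = true → y.testBit p = true) := by
  suffices h : ∀ r, r ≤ s.length → ∃ y ∈ I,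
      (∀ j, cntN n (bnd s j) y = cntN n (bnd s j) x) ∧
      (∀ k, k < r → ∀ p q : ℕ, bnd s k ≤ p → p ≤ q → q < bnd s (k+1) →
        y.testBit q = true → y.testBit p = true) by
    obtain ⟨y, hy, h1, h2⟩ := h s.length le_rfl
    exact ⟨y, hy, h1, fun k hk => h2 k hk⟩
  intro r
  induction r with
  | zero =>
    intro _
    exact ⟨x, hx, fun j => rfl, fun k hk => by omega⟩
  | succ r ih =>
    intro hr1
    have hr : r < s.length := by omega
    obtain ⟨y, hyI, hcnt, hdc⟩ := ih (by omega)
    have hy_lt : y < 2 ^ n := hIlt y hyI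
    have hw_le : bnd s r + s.get ⟨r, hr⟩ ≤ n := by
      have h1 : bnd s (r+1) = bnd s r + s.get ⟨r, hr⟩ := bnd_succ hr
      have h2 : bnd s (r+1) ≤ bnd s s.length := bnd_mono s (by omega)
      rw [bnd_length, hsum] at h2
      omega
    obtain ⟨σ, c, hcw, hfix, hwin, hbits_in, hbits_out⟩ :=
      exists_window_perm n (bnd s r) (s.get ⟨r, hr⟩) hw_le y
    have hbnd_r1 : bnd s (r+1) = bnd s r + s.get ⟨r, hr⟩ := bnd_succ hr
    -- rephrase window as [bnd s r, bnd s (r+1))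
    have hfix' : ∀ p : Fin n, ¬(bnd s r ≤ p.val ∧ p.val < bnd s (r+1)) → σ p = p := by
      intro p hp; exact hfix p (by omega)
    have hwin' : ∀ p : Fin n, (bnd s r ≤ p.val ∧ p.val < bnd s (r+1)) →
        bnd s r ≤ (σ p).val ∧ (σ p).val < bnd s (r+1) := by
      intro p hp
      have := hwin p (by omega)
      omega
    set y' := digitPerm σ y with hy'
    have hy'I : y' ∈ I := hI σ (blockPreserving_of_window r hfix' hwin') y hyI
    have hy'_lt : y' < 2 ^ n := hIlt y' hy'I
    refine ⟨y', hy'I, ?_, ?_⟩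
    · intro j
      rw [← hcnt j]
      apply cnt_digitPerm
      apply thr_of_window hfix' hwin'
      rcases le_or_gt j r with h | h
      · exact Or.inl (bnd_mono s h)
      · exact Or.inr (bnd_mono s h)
    · intro k hk p q hp1 hpq hq2 hbitq
      have hqn : q < n := by
        have : bnd s (k+1) ≤ bnd s s.length := bnd_mono s (by omega)
        rw [bnd_length, hsum] at this
        omega
      have hpn : p < n := by omega
      by_cases hkr : k = r
      · subst hkr
        have hq_in := hbits_in ⟨q, hqn⟩ (by simp only [Fin.val_mk]; omega)
        have hp_in := hbits_in ⟨p, hpn⟩ (by simp only [Fin.val_mk]; omega)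
        simp only [Fin.val_mk] at hq_in hp_in
        rw [hq_in] at hbitq
        rw [hp_in]
        simp only [decide_eq_true_eq] at hbitq ⊢
        omega
      · have hk_lt : k < r := by omega
        have hdisj : ∀ u : ℕ, u < bnd s (k+1) → ¬(bnd s r ≤ u ∧ u < bnd s r + s.get ⟨r, hr⟩) := by
          intro u hu
          have : bnd s (k+1) ≤ bnd s r := bnd_mono s (by omega)
          omega
        have hq_out := hbits_out ⟨q, hqn⟩ (hdisj q hq2)
        have hp_out := hbits_out ⟨p, hpn⟩ (hdisj p (by omega))
        simp only [Fin.val_mk] at hq_out hp_out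
        rw [hq_out] at hbitq
        rw [hp_out]
        exact hdc k hk_lt p q hp1 hpq hq2 hbitq

lemma interp {N n : ℕ} (s : List ℕ) (hmpos : 0 < s.length)
    (hsum : s.sum = n) (hnN : n ≤ N)
    (x y : ℕ) (hx : x < 2 ^ n)
    (hdc : ∀ k < s.length, ∀ p q : ℕ, bnd s k ≤ p → p ≤ q → q < bnd s (k+1) →
      x.testBit q = true → x.testBit p = true)
    (hbd : ∀ r < s.length, cntN N (bnd s r) x ≤ cntN N (bnd s r) y)
    (k : ℕ) : cntN N k x ≤ cntN N k y := by
  set m := s.length with hm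
  -- generic inner step, parameterized by the region [a, b) containing k with a = bnd s kb
  have main : ∀ (kb : ℕ), kb < m → bnd s kb ≤ k → k < bnd s (kb+1) →
      cntN N k x ≤ cntN N k y := by
    intro kb hkb ha hb
    have hbk : bnd s (kb+1) ≤ n := by
      have := bnd_mono s (by omega : kb + 1 ≤ m)
      rw [bnd_length, hsum] at this
      exact this
    rcases Finset.eq_empty_or_nonempty
      ((Finset.Ico k (bnd s (kb+1))).filter (fun p => x.testBit p)) with hE | hE
    · -- no ones of x in [k, bnd (kb+1)): jump to next boundary
      have h1 : cntN N k x = cntN N (bnd s (kb+1)) x := by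
        rw [cnt_split (x := x) (by omega : k ≤ bnd s (kb+1)) (by omega : bnd s (kb+1) ≤ N), hE]
        simp
      rcases Nat.lt_or_ge (kb+1) m with hlt | hge
      · calc cntN N k x = cntN N (bnd s (kb+1)) x := h1
          _ ≤ cntN N (bnd s (kb+1)) y := hbd (kb+1) hlt
          _ ≤ cntN N k y := cnt_anti (by omega)
      · -- kb+1 = m : cnt at bnd m = n counts bits ≥ n of x, which is 0
        have hm_eq : kb + 1 = m := by omega
        have h0 : cntN N (bnd s (kb+1)) x = 0 := by
          rw [hm_eq, bnd_length, hsum]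
          unfold cntN
          rw [Finset.card_eq_zero, Finset.filter_eq_empty_iff]
          intro q hq
          rw [Finset.mem_Ico] at hq
          rw [Nat.testBit_lt_two_pow
            (lt_of_lt_of_le hx (Nat.pow_le_pow_right (by norm_num) hq.1))]
          simp
        omega
    · -- there is a one of x at q ∈ [k, bnd (kb+1)): all of [bnd kb, k) is ones
      obtain ⟨q, hq⟩ := hE
      rw [Finset.mem_filter, Finset.mem_Ico] at hq
      have hall : ∀ p, bnd s kb ≤ p → p < k → x.testBit p = true := by
        intro p h1 h2
        exact hdc kb hkb p q h1 (by omega) hq.1.2 hq.2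
      have hx_split := cnt_split (N := N) (a := bnd s kb) (k := k) (x := x) ha (by omega)
      have hy_split := cnt_split (N := N) (a := bnd s kb) (k := k) (x := y) ha (by omega)
      have hx_card : ((Finset.Ico (bnd s kb) k).filter (fun p => x.testBit p)).card
          = k - bnd s kb := card_filter_all (fun p h1 h2 => hall p h1 h2)
      have hy_card : ((Finset.Ico (bnd s kb) k).filter (fun p => y.testBit p)).card
          ≤ k - bnd s kb := by
        calc _ ≤ (Finset.Ico (bnd s kb) k).card := Finset.card_le_card (Finset.filter_subset _ _)
          _ = k - bnd s kb := Nat.card_Ico _ _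
      have hbd' := hbd kb hkb
      omega
  rcases Nat.lt_or_ge k (bnd s (m-1)) with hk | hk
  · obtain ⟨r, hr, h1, h2⟩ := bnd_cover s (m-1) k hk
    exact main r (by omega) h1 h2
  · rcases Nat.lt_or_ge k (bnd s m) with hk2 | hk2
    · exact main (m-1) (by omega) hk (by rwa [Nat.sub_add_cancel (by omega)])
    · -- k ≥ n : cnt of x is 0
      have h0 : cntN N k x = 0 := by
        unfold cntN
        rw [Finset.card_eq_zero, Finset.filter_eq_empty_iff]
        intro q hq
        rw [Finset.mem_Ico] at hq
        rw [bnd_length, hsum] at hk2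
        rw [Nat.testBit_lt_two_pow
          (lt_of_lt_of_le hx (Nat.pow_le_pow_right (by norm_num) (by omega)))]
        simp
      omega

/-- **Symmetric Supercodes.** If every `s`-block-preserving permutation stabilizes the
UPO closure of `S` at `n` bits, then every `[s₁,…,s_{m−1}, s_m + t]`-block-preserving
permutation of `Fin (n + t)` stabilizes the UPO closure of `S` at `n + t` bits. -/
theorem symmetric_supercodes {n : ℕ} (S : Set ℕ) (hS : S ⊆ Set.Iio (2 ^ n))
    (s : List ℕ) (hne : s ≠ []) (hpos : ∀ x ∈ s, 0 < x) (hsum : s.sum = n)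
    (hstab : ∀ σ : Equiv.Perm (Fin n), BlockPreserving s σ →
      Stabilizes σ (upoClosure n S))
    (t : ℕ) (s' : List ℕ) (hs' : s' = s.dropLast ++ [s.getLast hne + t]) :
    ∀ σ' : Equiv.Perm (Fin (n + t)), BlockPreserving s' σ' →
      Stabilizes σ' (upoClosure (n + t) S) := by
  intro σ' hσ' j hj
  obtain ⟨hjlt, i0, hi0S, hupo⟩ := hj
  have hm1 : 1 ≤ s.length := List.length_pos_iff.2 hne
  have hdl : s.dropLast.length = s.length - 1 := List.length_dropLast
  have hsum_split : s.dropLast.sum + s.getLast hne = n := by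
    have h1 := List.dropLast_append_getLast hne
    have h2 : (s.dropLast ++ [s.getLast hne]).sum = s.sum := by rw [h1]
    rw [List.sum_append] at h2
    simp only [List.sum_cons, List.sum_nil, add_zero] at h2
    omega
  have hs'_sum : s'.sum = n + t := by
    rw [hs', List.sum_append]
    simp only [List.sum_cons, List.sum_nil, add_zero]
    omega
  have htake : ∀ r, r < s.length → bnd s' r = bnd s r := by
    intro r hr
    unfold bnd
    rw [hs', List.take_append_of_le_length (by omega : r ≤ s.dropLast.length),
      List.dropLast_eq_take, List.take_take, Nat.min_eq_left (by omega)]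
  have hylt : digitPerm σ' j < 2 ^ (n + t) := digitPerm_lt_two_pow σ' j
  have hIlt : ∀ z ∈ upoClosure n S, z < 2 ^ n := fun z hz => hz.1
  have hi0I : i0 ∈ upoClosure n S := ⟨hS hi0S, i0, hi0S, Relation.ReflTransGen.refl⟩
  obtain ⟨y1, hy1I, hcnt1, hdc1⟩ := justify s hsum (upoClosure n S) hstab hIlt i0 hi0I
  have hy1lt : y1 < 2 ^ n := hIlt y1 hy1I
  have hnN : n ≤ n + t := by omega
  have hbd : ∀ r < s.length,
      cntN (n+t) (bnd s r) y1 ≤ cntN (n+t) (bnd s r) (digitPerm σ' j) := by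
    intro r hr
    have e3 : cntN (n+t) (bnd s r) (digitPerm σ' j) = cntN (n+t) (bnd s r) j := by
      apply cnt_digitPerm
      intro p
      have := thr_of_blockPreserving hs'_sum hσ' r p
      rwa [htake r hr] at this
    rw [e3, cnt_shrink hy1lt hnN, hcnt1 r, ← cnt_shrink (hS hi0S) hnN]
    exact cnt_upo hupo _
  have hcle : ∀ k, cntN (n+t) k y1 ≤ cntN (n+t) k (digitPerm σ' j) :=
    interp s (by omega) hsum hnN y1 (digitPerm σ' j) hy1lt hdc1 hbd
  have hupo2 : UPO (n+t) y1 (digitPerm σ' j) :=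
    upo_of_cnt_le (lt_of_lt_of_le hy1lt (Nat.pow_le_pow_right (by norm_num) hnN)) hylt hcle
  obtain ⟨_, i1, hi1S, hupo1⟩ := hy1I
  exact ⟨hylt, i1, hi1S, Relation.ReflTransGen.trans (upo_mono hnN hupo1) hupo2⟩
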